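/- Let δ : R → B be an epimorphism in the category of rings with R commutative. Then B is commutative, the induced map Spec(B) → Spec(R) is injective, and for every prime 𝔮 of B the induced map of residue fields κ(δ^{-1}(𝔮)) → κ(𝔮) is an isomorphism. -/

import Mathlib

universe u

/-- The induced homomorphism of residue fields `κ(δ⁻¹(q)) → κ(q)` associated to a ring
homomorphism `δ : R → B` and a prime `q` of `B`. -/
noncomputable def residueFieldMap {R B : Type u} [CommRing R] [CommRing B] (δ : R →+* B)
    (q : Ideal B) [q.IsPrime] :
    IsLocalRing.ResidueField (Localization.AtPrime (q.comap δ)) →+*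
      IsLocalRing.ResidueField (Localization.AtPrime q) :=
  haveI := Localization.isLocalHom_localRingHom (q.comap δ) q δ rfl
  IsLocalRing.ResidueField.map (Localization.localRingHom (q.comap δ) q δ rfl)

-- commutativity key lemma
open IsLocalRing TensorProduct

lemma epi_commute_of_commute_range {R B : Type u} [CommRing R] [Ring B] (δ : R →+* B)
    (hepi : ∀ (C : Type u) [Ring C] (f g : B →+* C), f.comp δ = g.comp δ → f = g)
    (c : B) (hc : ∀ r : R, δ r * c = c * δ r) : ∀ b : B, b * c = c * b := by
  classical
  let f : B →+* TrivSqZeroExt B B := TrivSqZeroExt.inlHom B B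
  let g : B →+* TrivSqZeroExt B B :=
  { toFun := fun b => ⟨b, b * c - c * b⟩
    map_one' := by ext <;> simp
    map_zero' := by ext <;> simp
    map_mul' := fun x y => by
      ext
      · rfl
      · 
        show x * y * c - c * (x * y) = x * (y * c - c * y) + (x * c - c * x) * y
        noncomm_ring
    map_add' := fun x y => by
      ext
      · rfl
      · 
        show (x + y) * c - c * (x + y) = (x * c - c * x) + (y * c - c * y)
        noncomm_ring }
  have hfg : f.comp δ = g.comp δ := by
    ext r
    · rfl
    · show (0 : B) = δ r * c - c * δ r
      rw [hc r, sub_self]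
  have := hepi _ f g hfg
  intro b
  have hb := congrArg (fun h : B →+* TrivSqZeroExt B B => (h b).snd) this
  have hb' : (0 : B) = b * c - c * b := hb
  exact sub_eq_zero.mp hb'.symm

lemma aux_square' {R S : Type u} [CommRing R] [CommRing S] (f : R →+* S)
    (I : Ideal R) [I.IsPrime] (J : Ideal S) [J.IsPrime] (h : I = J.comap f) (r : R) :
    haveI := Localization.isLocalHom_localRingHom I J f h
    IsLocalRing.ResidueField.map (Localization.localRingHom I J f h)
      (IsLocalRing.residue _ (algebraMap R (Localization.AtPrime I) r)) =
      IsLocalRing.residue _ (algebraMap S (Localization.AtPrime J) (f r)) := by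
  haveI := Localization.isLocalHom_localRingHom I J f h
  rw [IsLocalRing.ResidueField.map_residue, Localization.localRingHom_to_map]

lemma aux_mem_range{k K : Type u} [Field k] [Field K] [Algebra k K] (s : K)
    (h : s ⊗ₜ[k] (1 : K) = 1 ⊗ₜ[k] s) : ∃ c : k, algebraMap k K c = s := by
  by_contra hs
  set F0 : K →ₗ.[k] k := ⟨Submodule.span k {(1 : K)}, 0⟩ with hF0
  have hs' : s ∉ F0.domain := by
    intro hmem
    rw [show F0.domain = Submodule.span k {(1 : K)} from rfl,
      Submodule.mem_span_singleton] at hmem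
    obtain ⟨c, hcs⟩ := hmem
    exact hs ⟨c, by rw [Algebra.algebraMap_eq_smul_one, hcs]⟩
  obtain ⟨g, hg⟩ := (F0.supSpanSingleton s 1 hs').toFun.exists_extend
  have h1mem : (1 : K) ∈ F0.domain := Submodule.mem_span_singleton_self _
  have hg1 : g 1 = 0 := by
    have e1 := LinearPMap.supSpanSingleton_apply_mk F0 s 1 hs' 1 h1mem 0
    have e2 := LinearMap.congr_fun hg ⟨(1 : K) + (0 : k) • s,
      Submodule.mem_sup.2 ⟨1, h1mem, _, Submodule.mem_span_singleton.2 ⟨0, rfl⟩, rfl⟩⟩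
    have e3 : g ((1 : K) + (0 : k) • s) = F0 ⟨1, h1mem⟩ + (0 : k) • (1 : k) :=
      e2.trans e1
    have e4 : F0 ⟨1, h1mem⟩ = 0 := rfl
    rw [e4] at e3
    simpa using e3
  have hgs : g s = 1 := by
    have e1 := LinearPMap.supSpanSingleton_apply_mk F0 s 1 hs' 0 (Submodule.zero_mem _) 1
    have e2 := LinearMap.congr_fun hg ⟨(0 : K) + (1 : k) • s,
      Submodule.mem_sup.2 ⟨0, Submodule.zero_mem _, _,
        Submodule.mem_span_singleton.2 ⟨1, rfl⟩, rfl⟩⟩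
    have e3 : g ((0 : K) + (1 : k) • s) = F0 ⟨0, Submodule.zero_mem _⟩ + (1 : k) • (1 : k) :=
      e2.trans e1
    have e4 : F0 ⟨0, Submodule.zero_mem _⟩ = 0 := rfl
    simpa [hF0, e4] using e3
  have := congrArg (fun z => TensorProduct.lid k K (LinearMap.rTensor K g z)) h
  simp only [LinearMap.rTensor_tmul, TensorProduct.lid_tmul, hg1, hgs, one_smul,
    zero_smul] at this
  exact one_ne_zero this

lemma aux_surj {R B' : Type u} [CommRing R] [CommRing B'] (δ' : R →+* B')
    (hepi : ∀ (C : Type u) [Ring C] (f g : B' →+* C), f.comp δ' = g.comp δ' → f = g)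
    (q : Ideal B') [q.IsPrime] : Function.Surjective (residueFieldMap δ' q) := by
  classical
  set p := q.comap δ' with hp
  letI : Algebra (ResidueField (Localization.AtPrime p)) (ResidueField (Localization.AtPrime q)) :=
    (residueFieldMap δ' q).toAlgebra
  set k := ResidueField (Localization.AtPrime p)
  set K := ResidueField (Localization.AtPrime q) with hK
  let ρ : B' →+* K := (IsLocalRing.residue _).comp (algebraMap B' (Localization.AtPrime q))
  have halg : ∀ z, algebraMap k K z = residueFieldMap δ' q z := fun _ => rfl
  have h1 : ∀ x : B', ρ x ⊗ₜ[k] (1 : K) = 1 ⊗ₜ[k] ρ x := by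
    have key := hepi (K ⊗[k] K)
      ((Algebra.TensorProduct.includeLeftRingHom).comp ρ)
      ((Algebra.TensorProduct.includeRight (R := k) (A := K) (B := K)).toRingHom.comp ρ) ?_
    · intro x
      exact RingHom.congr_fun key x
    · ext r
      show ρ (δ' r) ⊗ₜ[k] (1 : K) = 1 ⊗ₜ[k] ρ (δ' r)
      have hsq : ρ (δ' r) =
          algebraMap k K (IsLocalRing.residue _ (algebraMap R (Localization.AtPrime p) r)) := by
        rw [halg]
        exact (aux_square' δ' p q rfl r).symm
      rw [hsq, Algebra.algebraMap_eq_smul_one, TensorProduct.smul_tmul]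
  have h2 : ∀ s : K, s ⊗ₜ[k] (1 : K) = 1 ⊗ₜ[k] s := by
    intro s
    obtain ⟨l, rfl⟩ := Ideal.Quotient.mk_surjective (I := maximalIdeal (Localization.AtPrime q)) s
    obtain ⟨⟨x, y⟩, rfl⟩ := IsLocalization.mk'_surjective q.primeCompl l
    set u : K := ρ y with hu
    have huu : IsUnit u :=
      (IsLocalization.map_units (Localization.AtPrime q) y).map (IsLocalRing.residue _)
    have hune : u ≠ 0 := huu.ne_zero
    set s : K := IsLocalRing.residue _ (IsLocalization.mk' (Localization.AtPrime q) x y) with hs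
    have hsu : s * u = ρ x := by
      have hspec : (IsLocalization.mk' (Localization.AtPrime q) x y) *
          (algebraMap B' (Localization.AtPrime q) y) =
          algebraMap B' (Localization.AtPrime q) x := IsLocalization.mk'_spec _ x y
      calc s * u = IsLocalRing.residue _ ((IsLocalization.mk' (Localization.AtPrime q) x y) *
            (algebraMap B' (Localization.AtPrime q) y)) := (map_mul _ _ _).symm
        _ = ρ x := by rw [hspec]; rfl
    have hseq : s = ρ x * u⁻¹ := by
      rw [eq_mul_inv_iff_mul_eq₀ hune]
      exact hsu
    have hinv : u⁻¹ ⊗ₜ[k] (1 : K) = 1 ⊗ₜ[k] u⁻¹ := by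
      have huy := h1 y
      have step : u ⊗ₜ[k] u⁻¹ = (1 : K ⊗[k] K) := by
        have : u ⊗ₜ[k] u⁻¹ = (u ⊗ₜ[k] (1:K)) * ((1:K) ⊗ₜ[k] u⁻¹) := by
          rw [Algebra.TensorProduct.tmul_mul_tmul, mul_one, one_mul]
        rw [this, huy, Algebra.TensorProduct.tmul_mul_tmul, one_mul,
          mul_inv_cancel₀ hune, Algebra.TensorProduct.one_def]
      calc u⁻¹ ⊗ₜ[k] (1 : K) = (u⁻¹ ⊗ₜ[k] (1:K)) * (u ⊗ₜ[k] u⁻¹) := by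
            rw [step, mul_one]
        _ = (u⁻¹ * u) ⊗ₜ[k] u⁻¹ := by
            rw [Algebra.TensorProduct.tmul_mul_tmul, one_mul]
        _ = 1 ⊗ₜ[k] u⁻¹ := by rw [inv_mul_cancel₀ hune]
    show s ⊗ₜ[k] (1 : K) = 1 ⊗ₜ[k] s
    rw [hseq]
    calc (ρ x * u⁻¹) ⊗ₜ[k] (1:K) = (ρ x ⊗ₜ[k] (1:K)) * (u⁻¹ ⊗ₜ[k] (1:K)) := by
          rw [Algebra.TensorProduct.tmul_mul_tmul, mul_one]
      _ = ((1:K) ⊗ₜ[k] ρ x) * ((1:K) ⊗ₜ[k] u⁻¹) := by rw [h1 x, hinv]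
      _ = 1 ⊗ₜ[k] (ρ x * u⁻¹) := by
          rw [Algebra.TensorProduct.tmul_mul_tmul, mul_one]
  intro s
  obtain ⟨c, hc⟩ := aux_mem_range s (h2 s)
  exact ⟨c, hc⟩

lemma aux_bij {R B' : Type u} [CommRing R] [CommRing B'] (δ' : R →+* B')
    (hepi : ∀ (C : Type u) [Ring C] (f g : B' →+* C), f.comp δ' = g.comp δ' → f = g)
    (q : Ideal B') [q.IsPrime] : Function.Bijective (residueFieldMap δ' q) :=
  ⟨(residueFieldMap δ' q).injective, aux_surj δ' hepi q⟩

lemma aux_inj {R B' : Type u} [CommRing R] [CommRing B'] (δ' : R →+* B')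
    (hepi : ∀ (C : Type u) [Ring C] (f g : B' →+* C), f.comp δ' = g.comp δ' → f = g) :
    Function.Injective (PrimeSpectrum.comap δ') := by
  intro Q₁ Q₂ hQ
  have hI : Q₁.asIdeal.comap δ' = Q₂.asIdeal.comap δ' := by
    have := congrArg PrimeSpectrum.asIdeal hQ
    simpa [PrimeSpectrum.comap_asIdeal] using this
  haveI h1p : Q₁.asIdeal.IsPrime := Q₁.isPrime
  haveI h2p : Q₂.asIdeal.IsPrime := Q₂.isPrime
  set q₁ := Q₁.asIdeal
  set q₂ := Q₂.asIdeal
  set p₁ := q₁.comap δ' with hp₁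
  set p₂ := q₂.comap δ' with hp₂
  have hid : p₂ = p₁.comap (RingHom.id R) := by rw [Ideal.comap_id]; exact hI.symm
  haveI := Localization.isLocalHom_localRingHom p₂ p₁ (RingHom.id R) hid
  let χ : ResidueField (Localization.AtPrime p₂) →+* ResidueField (Localization.AtPrime p₁) :=
    IsLocalRing.ResidueField.map (Localization.localRingHom p₂ p₁ (RingHom.id R) hid)
  let e₁ := RingEquiv.ofBijective _ (aux_bij δ' hepi q₁)
  let e₂ := RingEquiv.ofBijective _ (aux_bij δ' hepi q₂)
  let ρ₁ : B' →+* ResidueField (Localization.AtPrime q₁) :=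
    (IsLocalRing.residue _).comp (algebraMap B' (Localization.AtPrime q₁))
  let ρ₂ : B' →+* ResidueField (Localization.AtPrime q₂) :=
    (IsLocalRing.residue _).comp (algebraMap B' (Localization.AtPrime q₂))
  let τ : ResidueField (Localization.AtPrime q₂) →+* ResidueField (Localization.AtPrime q₁) :=
    (e₁ : ResidueField (Localization.AtPrime p₁) →+* _).comp
      (χ.comp (e₂.symm : ResidueField (Localization.AtPrime q₂) →+* _))
  have τinj : Function.Injective τ := by
    simp only [τ, RingHom.coe_comp, RingEquiv.coe_toRingHom]
    exact e₁.injective.comp (χ.injective.comp e₂.symm.injective)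
  let f₂ : B' →+* ResidueField (Localization.AtPrime q₁) := τ.comp ρ₂
  have hcomp : ρ₁.comp δ' = f₂.comp δ' := by
    ext r
    have l1 : ρ₁ (δ' r) = residueFieldMap δ' q₁
        (IsLocalRing.residue _ (algebraMap R (Localization.AtPrime p₁) r)) :=
      (aux_square' δ' p₁ q₁ rfl r).symm
    have l2 : ρ₂ (δ' r) = residueFieldMap δ' q₂
        (IsLocalRing.residue _ (algebraMap R (Localization.AtPrime p₂) r)) :=
      (aux_square' δ' p₂ q₂ rfl r).symm
    have l3 : e₂.symm (ρ₂ (δ' r)) =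
        IsLocalRing.residue _ (algebraMap R (Localization.AtPrime p₂) r) := by
      rw [l2]
      have hre : residueFieldMap δ' q₂
          (IsLocalRing.residue _ (algebraMap R (Localization.AtPrime p₂) r)) =
          e₂ (IsLocalRing.residue _ (algebraMap R (Localization.AtPrime p₂) r)) := rfl
      rw [hre]
      exact e₂.symm_apply_apply _
    have l4 : χ (IsLocalRing.residue _ (algebraMap R (Localization.AtPrime p₂) r)) =
        IsLocalRing.residue _ (algebraMap R (Localization.AtPrime p₁) r) :=
      aux_square' (RingHom.id R) p₂ p₁ hid r
    show ρ₁ (δ' r) = e₁ (χ (e₂.symm (ρ₂ (δ' r))))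
    rw [l1, l3, l4]
    rfl
  have hf := hepi _ ρ₁ f₂ hcomp
  have mem₁ : ∀ x : B', x ∈ q₁ ↔ ρ₁ x = 0 := fun x => by
    rw [show ρ₁ x = IsLocalRing.residue _ (algebraMap B' (Localization.AtPrime q₁) x) from rfl,
      IsLocalRing.residue_eq_zero_iff]
    exact (IsLocalization.AtPrime.to_map_mem_maximal_iff _ q₁ x).symm
  have mem₂ : ∀ x : B', x ∈ q₂ ↔ ρ₂ x = 0 := fun x => by
    rw [show ρ₂ x = IsLocalRing.residue _ (algebraMap B' (Localization.AtPrime q₂) x) from rfl,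
      IsLocalRing.residue_eq_zero_iff]
    exact (IsLocalization.AtPrime.to_map_mem_maximal_iff _ q₂ x).symm
  have : q₁ = q₂ := by
    ext x
    rw [mem₁, mem₂, hf]
    show f₂ x = 0 ↔ ρ₂ x = 0
    rw [show f₂ x = τ (ρ₂ x) from rfl, map_eq_zero_iff τ τinj]
  exact PrimeSpectrum.ext this

/-- if `δ : R → B` is an epimorphism of rings with `R` commutative, then
`B` is commutative, `Spec(B) → Spec(R)` is injective, and for every prime `q` of `B` the
induced map of residue fields `κ(δ⁻¹(q)) → κ(q)` is an isomorphism (the last two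
statements being phrased for epimorphisms into commutative rings, as provided by the
first part). -/
theorem stmt10 {R B : Type u} [CommRing R] [Ring B] (δ : R →+* B)
    (hepi : ∀ (C : Type u) [Ring C] (f g : B →+* C), f.comp δ = g.comp δ → f = g) :
    (∀ x y : B, x * y = y * x) ∧
    (∀ (B' : Type u) [CommRing B'] (δ' : R →+* B'),
      (∀ (C : Type u) [Ring C] (f g : B' →+* C), f.comp δ' = g.comp δ' → f = g) →
      Function.Injective (PrimeSpectrum.comap δ') ∧
      ∀ (q : Ideal B') [q.IsPrime], Function.Bijective (residueFieldMap δ' q)) := by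
  constructor
  · intro x y
    have central : ∀ (r : R) (b : B), δ r * b = b * δ r := fun r b =>
      (epi_commute_of_commute_range δ hepi (δ r)
        (fun r' => by rw [← map_mul, ← map_mul, mul_comm]) b).symm
    exact epi_commute_of_commute_range δ hepi y (fun r => central r y) x
  · intro B' _ δ' hepi'
    refine ⟨aux_inj δ' hepi', ?_⟩
    intro q hq
    exact aux_bij δ' hepi' q
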